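/- arXiv:1005.1694 — 2 statements merged into one kernel-verified Lean document; each statement's English description precedes it below -/
import Mathlib

section
/- Let f : ℕ → ℕ and define g : ℕ → ℕ by g(2k−1) = ⌊f(k)/2⌋ and g(2k) = ⌈f(k)/2⌉. If liminf f*(t)/t > 3, then liminf g*(t)/t > 3/2, where h* denotes partial sums. -/
open Filter

theorem stmt_9 (f g : ℕ → ℕ)
    (hg : ∀ k : ℕ, k ≥ 1 → g (2 * k - 1) = f k / 2 ∧ g (2 * k) = (f k + 1) / 2)
    (hf : Filter.liminf (fun t : ℕ => ((∑ τ ∈ Finset.Icc 1 t, f τ : ℕ) : ℝ) / t)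
        Filter.atTop > 3) :
    Filter.liminf (fun t : ℕ => ((∑ τ ∈ Finset.Icc 1 t, g τ : ℕ) : ℝ) / t)
      Filter.atTop > 3 / 2 := by
  set u : ℕ → ℝ := fun t : ℕ => ((∑ τ ∈ Finset.Icc 1 t, f τ : ℕ) : ℝ) / t with hu
  set v : ℕ → ℝ := fun t : ℕ => ((∑ τ ∈ Finset.Icc 1 t, g τ : ℕ) : ℝ) / t with hv
  -- key identity: partial sums of g at even times equal partial sums of f
  have key : ∀ s : ℕ, ∑ τ ∈ Finset.Icc 1 (2 * s), g τ = ∑ k ∈ Finset.Icc 1 s, f k := by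
    intro s
    induction s with
    | zero => simp
    | succ n ih =>
      have h1 := hg (n + 1) (by omega)
      have e1 : 2 * (n + 1) - 1 = 2 * n + 1 := by omega
      have e2 : 2 * (n + 1) = 2 * n + 1 + 1 := by omega
      rw [e2, Finset.sum_Icc_succ_top (by omega), Finset.sum_Icc_succ_top (by omega), ih,
        Finset.sum_Icc_succ_top (by omega : 1 ≤ n + 1)]
      rw [e1] at h1
      rw [← e2, h1.1, h1.2]
      omega
  -- nonnegativity
  have hu0 : ∀ t, 0 ≤ u t := fun t => by positivity
  have hbdd : Filter.IsBoundedUnder (· ≥ ·) Filter.atTop u :=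
    ⟨0, Filter.eventually_map.2 (Filter.Eventually.of_forall hu0)⟩
  -- extract c with 3 < c < liminf u
  set L := Filter.liminf u Filter.atTop with hL
  set c : ℝ := (3 + L) / 2 with hc
  have hc3 : 3 < c := by simp only [hc]; linarith
  have hcL : c < L := by simp only [hc]; linarith
  have hev : ∀ᶠ t in Filter.atTop, c < u t :=
    Filter.eventually_lt_of_lt_liminf hcL hbdd
  obtain ⟨N, hN⟩ := Filter.eventually_atTop.mp hev
  -- coboundedness of v
  have hS : BddAbove {a : ℝ | ∀ᶠ t in Filter.atTop, a ≤ u t} := by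
    by_contra hcon
    have hf' : (3:ℝ) < Filter.liminf u Filter.atTop := hf
    rw [Filter.liminf_eq, Real.sSup_of_not_bddAbove hcon] at hf'
    norm_num at hf'
  obtain ⟨B, hB⟩ := hS
  have hBfreq : ∃ᶠ t in Filter.atTop, u t < B + 1 := by
    by_contra hcon
    rw [Filter.not_frequently] at hcon
    push_neg at hcon
    have : (B + 1 : ℝ) ∈ {a : ℝ | ∀ᶠ t in Filter.atTop, a ≤ u t} := hcon
    have := hB this
    linarith
  have hvfreq : ∃ᶠ t in Filter.atTop, v t ≤ B + 1 := by
    rw [Filter.frequently_atTop] at hBfreq ⊢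
    intro a
    obtain ⟨t, ht, htu⟩ := hBfreq (max a 1)
    have ht1 : 1 ≤ t := le_trans (le_max_right a 1) ht
    have hta : a ≤ t := le_trans (le_max_left a 1) ht
    refine ⟨2 * t, by omega, ?_⟩
    have hvu : v (2 * t) = u t / 2 := by
      simp only [hv, hu, key t]
      have h2t : ((2 * t : ℕ) : ℝ) = 2 * (t : ℝ) := by push_cast; ring
      rw [h2t, mul_comm (2:ℝ), ← div_div]
    rw [hvu]
    have := hu0 t
    linarith
  have hcob : Filter.IsCoboundedUnder (· ≥ ·) Filter.atTop v :=
    Filter.IsCoboundedUnder.of_frequently_le hvfreq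
  -- target constant
  set c' : ℝ := 3 / 4 + c / 4 with hc'
  have hc'2 : 3 / 2 < c' := by simp only [hc']; linarith
  have hcpos : (0:ℝ) < c := by linarith
  have hgap : (0:ℝ) < c / 2 - 3 / 2 := by linarith
  -- choose threshold
  set T : ℕ := max (2 * N + 2) (⌈c / (c / 2 - 3 / 2)⌉₊ + 1) with hT
  have hevv : ∀ᶠ t in Filter.atTop, c' ≤ v t := by
    rw [Filter.eventually_atTop]
    refine ⟨T, fun t ht => ?_⟩
    have htN : 2 * N + 2 ≤ t := le_trans (le_max_left _ _) ht
    have htC : (⌈c / (c / 2 - 3 / 2)⌉₊ + 1 : ℕ) ≤ t := le_trans (le_max_right _ _) ht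
    set s : ℕ := t / 2 with hs
    have hsN : N ≤ s := by omega
    have hs1 : 1 ≤ s := by omega
    have ht1 : 1 ≤ t := by omega
    -- G t ≥ F s
    have hmono : ∑ k ∈ Finset.Icc 1 s, f k ≤ ∑ τ ∈ Finset.Icc 1 t, g τ := by
      rw [← key s]
      exact Finset.sum_le_sum_of_subset (Finset.Icc_subset_Icc le_rfl (by omega))
    -- F s ≥ c * s
    have hFs : c * (s : ℝ) ≤ ((∑ k ∈ Finset.Icc 1 s, f k : ℕ) : ℝ) := by
      have := hN s hsN
      have hspos : (0:ℝ) < (s : ℝ) := by exact_mod_cast hs1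
      rw [hu] at this
      simp only at this
      rw [lt_div_iff₀ hspos] at this
      linarith
    -- s ≥ (t-1)/2 over ℝ
    have hst : ((t : ℝ) - 1) / 2 ≤ (s : ℝ) := by
      have : t ≤ 2 * s + 1 := by omega
      have : (t : ℝ) ≤ 2 * (s : ℝ) + 1 := by exact_mod_cast this
      linarith
    -- t large
    have htbig : c / (c / 2 - 3 / 2) ≤ (t : ℝ) := by
      have h1 : (⌈c / (c / 2 - 3 / 2)⌉₊ : ℝ) ≤ (t : ℝ) := by
        exact_mod_cast Nat.le_of_succ_le htC
      exact le_trans (Nat.le_ceil _) h1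
    have htkey : c ≤ (t : ℝ) * (c / 2 - 3 / 2) := by
      rw [div_le_iff₀ hgap] at htbig
      linarith
    have htpos : (0:ℝ) < (t : ℝ) := by exact_mod_cast ht1
    rw [hv]
    simp only
    rw [le_div_iff₀ htpos]
    have h2 : ((∑ k ∈ Finset.Icc 1 s, f k : ℕ) : ℝ) ≤ ((∑ τ ∈ Finset.Icc 1 t, g τ : ℕ) : ℝ) := by
      exact_mod_cast hmono
    have h3 : c * (((t : ℝ) - 1) / 2) ≤ c * (s : ℝ) :=
      mul_le_mul_of_nonneg_left hst (le_of_lt hcpos)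
    have h4 : c' * (t : ℝ) ≤ c * (((t : ℝ) - 1) / 2) := by
      simp only [hc']
      nlinarith
    calc c' * (t : ℝ) ≤ c * (((t : ℝ) - 1) / 2) := h4
      _ ≤ c * (s : ℝ) := h3
      _ ≤ ((∑ k ∈ Finset.Icc 1 s, f k : ℕ) : ℝ) := hFs
      _ ≤ ((∑ τ ∈ Finset.Icc 1 t, g τ : ℕ) : ℝ) := h2
  have := Filter.le_liminf_of_le hcob hevv
  calc (3:ℝ)/2 < c' := hc'2
    _ ≤ _ := this
end

section
/- For every r ≥ 1 and m ≥ 1 (natural numbers), the following inequalities hold: f*(2r) ≥ 6r+1, f*(6rm+1) ≥ 18rm+6r+4, f*(6rm²+10rm) ≥ 18rm²+36rm+10r, and f*(12rm²+30rm) ≥ 36rm²+102rm+30r, whenever f : ℕ → ℕ satisfies f*(mk+1) > 3mk + 3m + k for all k ∈ ℕ and f* is monotone nondecreasing with f*(t) ≥ 3t + 1 for all t ≥ 1. -/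
theorem stmt_13 (f : ℕ → ℕ) (r m : ℕ) (hr : r ≥ 1) (hm : m ≥ 1)
    (h1 : ∀ k : ℕ, (∑ τ ∈ Finset.Icc 1 (m * k + 1), f τ) > 3 * m * k + 3 * m + k)
    (h2 : Monotone (fun t : ℕ => ∑ τ ∈ Finset.Icc 1 t, f τ))
    (h3 : ∀ t : ℕ, t ≥ 1 → (∑ τ ∈ Finset.Icc 1 t, f τ) ≥ 3 * t + 1) :
    (∑ τ ∈ Finset.Icc 1 (2 * r), f τ) ≥ 6 * r + 1 ∧
    (∑ τ ∈ Finset.Icc 1 (6 * r * m + 1), f τ) ≥ 18 * r * m + 6 * r + 4 ∧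
    (∑ τ ∈ Finset.Icc 1 (6 * r * m ^ 2 + 10 * r * m), f τ)
      ≥ 18 * r * m ^ 2 + 36 * r * m + 10 * r ∧
    (∑ τ ∈ Finset.Icc 1 (12 * r * m ^ 2 + 30 * r * m), f τ)
      ≥ 36 * r * m ^ 2 + 102 * r * m + 30 * r := by
  refine ⟨?_, ?_, ?_, ?_⟩
  · have h := h3 (2 * r) (by omega)
    linarith
  · have h := h1 (6 * r)
    have e : m * (6 * r) + 1 = 6 * r * m + 1 := by ring
    rw [e] at h
    nlinarith
  · set k := 6 * r * m + 10 * r - 1 with hkdef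
    have hk1 : k + 1 = 6 * r * m + 10 * r := by
      have : 1 ≤ 6 * r * m + 10 * r := by nlinarith
      omega
    have hmk : m * k + m = 6 * r * m ^ 2 + 10 * r * m := by
      calc m * k + m = m * (k + 1) := by ring
        _ = m * (6 * r * m + 10 * r) := by rw [hk1]
        _ = 6 * r * m ^ 2 + 10 * r * m := by ring
    have hle : m * k + 1 ≤ 6 * r * m ^ 2 + 10 * r * m := by omega
    have hmono := h2 hle
    have h := h1 k
    simp only [] at hmono
    nlinarith [hmono, h, hmk, hk1]
  · set k := 12 * r * m + 30 * r - 1 with hkdef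
    have hk1 : k + 1 = 12 * r * m + 30 * r := by
      have : 1 ≤ 12 * r * m + 30 * r := by nlinarith
      omega
    have hmk : m * k + m = 12 * r * m ^ 2 + 30 * r * m := by
      calc m * k + m = m * (k + 1) := by ring
        _ = m * (12 * r * m + 30 * r) := by rw [hk1]
        _ = 12 * r * m ^ 2 + 30 * r * m := by ring
    have hle : m * k + 1 ≤ 12 * r * m ^ 2 + 30 * r * m := by omega
    have hmono := h2 hle
    have h := h1 k
    simp only [] at hmono
    nlinarith [hmono, h, hmk, hk1]
end
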